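/- Let X be a Banach space, {v_j}_{j∈ℕ} ⊂ X a bounded sequence, and k = {k_j}_{j∈ℕ} a strictly increasing sequence of natural numbers of density 1. If the Cesàro averages (1/n)∑_{j=0}^{n−1} v_j converge in norm to some L ∈ X, then the subsequential averages (1/n)∑_{j=0}^{n−1} v_{k_j} also converge in norm to L. -/

import Mathlib

open scoped Classical

/-- A strictly increasing sequence `k : ℕ → ℕ` has density `d` if
`|{0,1,…,n} ∩ range k| / (n+1) → d`. -/
def HasDensity (k : ℕ → ℕ) (d : ℝ) : Prop :=
  Filter.Tendsto
    (fun n : ℕ =>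
      (((Finset.range (n + 1)).filter (fun j => j ∈ Set.range k)).card : ℝ) / ((n : ℝ) + 1))
    Filter.atTop (nhds d)

/-- If `{v_j}` is a bounded sequence in a Banach space whose Cesàro averages converge in norm
to `L`, and `k` is a strictly increasing sequence of natural numbers of density `1`, then the
subsequential averages `(1/n) ∑_{j<n} v_{k_j}` also converge in norm to `L`. -/
theorem subsequential_cesaro_convergence {X : Type*} [NormedAddCommGroup X] [NormedSpace ℝ X]
    [CompleteSpace X] (v : ℕ → X) (C : ℝ) (hC : ∀ j : ℕ, ‖v j‖ ≤ C)
    (k : ℕ → ℕ) (hk : StrictMono k) (hdens : HasDensity k 1) (L : X)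
    (hconv : Filter.Tendsto
      (fun n : ℕ => (1 / (n : ℝ)) • ∑ j ∈ Finset.range n, v j) Filter.atTop (nhds L)) :
    Filter.Tendsto
      (fun n : ℕ => (1 / (n : ℝ)) • ∑ j ∈ Finset.range n, v (k j)) Filter.atTop (nhds L) := by
  set C' := max C 0 with hC'def
  have hC'0 : 0 ≤ C' := le_max_right _ _
  have hvC' : ∀ j, ‖v j‖ ≤ C' := fun j => (hC j).trans (le_max_left _ _)
  have hkge : ∀ n, n ≤ k n := fun n => hk.le_apply
  have hktop : Filter.Tendsto k Filter.atTop Filter.atTop := hk.tendsto_atTop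
  have himg : ∀ n, (Finset.range (k n)).filter (fun j => j ∈ Set.range k)
      = (Finset.range n).image k := by
    intro n; ext m
    simp only [Finset.mem_filter, Finset.mem_range, Finset.mem_image, Set.mem_range]
    constructor
    · rintro ⟨hm, j, rfl⟩; exact ⟨j, hk.lt_iff_lt.mp hm, rfl⟩
    · rintro ⟨j, hj, rfl⟩; exact ⟨hk.lt_iff_lt.mpr hj, j, rfl⟩
  have himg' : ∀ n, (Finset.range (k n + 1)).filter (fun j => j ∈ Set.range k)
      = (Finset.range (n + 1)).image k := by
    intro n; ext m
    simp only [Finset.mem_filter, Finset.mem_range, Finset.mem_image, Set.mem_range,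
      Nat.lt_succ_iff]
    constructor
    · rintro ⟨hm, j, rfl⟩; exact ⟨j, hk.le_iff_le.mp hm, rfl⟩
    · rintro ⟨j, hj, rfl⟩; exact ⟨hk.le_iff_le.mpr hj, j, rfl⟩
  have hcard : ∀ n, ((Finset.range (k n)).filter (fun j => j ∈ Set.range k)).card = n := by
    intro n; rw [himg, Finset.card_image_of_injective _ hk.injective, Finset.card_range]
  have hcard' : ∀ n,
      ((Finset.range (k n + 1)).filter (fun j => j ∈ Set.range k)).card = n + 1 := by
    intro n; rw [himg', Finset.card_image_of_injective _ hk.injective, Finset.card_range]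
  -- (n+1)/(k n + 1) → 1
  have hA : Filter.Tendsto (fun n : ℕ => ((n : ℝ) + 1) / ((k n : ℝ) + 1))
      Filter.atTop (nhds 1) := by
    have h := hdens.comp hktop
    refine h.congr fun n => ?_
    show ((((Finset.range (k n + 1)).filter (fun j => j ∈ Set.range k)).card : ℝ)) / ((k n : ℝ) + 1) = _
    rw [hcard' n]
    push_cast
    ring
  -- (k n + 1)/(n + 1) → 1
  have hB : Filter.Tendsto (fun n : ℕ => ((k n : ℝ) + 1) / ((n : ℝ) + 1))
      Filter.atTop (nhds 1) := by
    have h := hA.inv₀ one_ne_zero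
    simpa [inv_div] using h
  -- k n / n → 1
  have hratio : Filter.Tendsto (fun n : ℕ => (k n : ℝ) / (n : ℝ)) Filter.atTop (nhds 1) := by
    have h1 : Filter.Tendsto (fun n : ℕ => ((n : ℝ) + 1) / (n : ℝ)) Filter.atTop (nhds 1) := by
      have := (tendsto_const_nhds (x := (1:ℝ)) (f := Filter.atTop (α := ℕ))).add
        tendsto_one_div_atTop_nhds_zero_nat
      simp only [add_zero] at this
      refine this.congr' ?_
      filter_upwards [Filter.eventually_gt_atTop 0] with n hn
      have hn' : (n : ℝ) ≠ 0 := Nat.cast_ne_zero.mpr hn.ne'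
      field_simp
    have h2 : Filter.Tendsto (fun n : ℕ => 1 / (n : ℝ)) Filter.atTop (nhds 0) :=
      tendsto_one_div_atTop_nhds_zero_nat
    have h := (hB.mul h1).sub h2
    simp only [one_mul, sub_zero] at h
    refine h.congr' ?_
    filter_upwards [Filter.eventually_gt_atTop 0] with n hn
    have hn' : (n : ℝ) ≠ 0 := Nat.cast_ne_zero.mpr hn.ne'
    have hn1 : (n : ℝ) + 1 ≠ 0 := by positivity
    field_simp
    ring
  -- error term tends to 0
  have hErrRatio : Filter.Tendsto (fun n : ℕ => ((k n : ℝ) - n) / n) Filter.atTop (nhds 0) := by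
    have h := hratio.sub (tendsto_const_nhds (x := (1:ℝ)))
    simp only [sub_self] at h
    refine h.congr' ?_
    filter_upwards [Filter.eventually_gt_atTop 0] with n hn
    have hn' : (n : ℝ) ≠ 0 := Nat.cast_ne_zero.mpr hn.ne'
    field_simp
  have hErr : Filter.Tendsto (fun n : ℕ => ((k n : ℝ) - n) / n * C') Filter.atTop (nhds 0) := by
    simpa using hErrRatio.mul_const C'
  -- the main term
  set main : ℕ → X := fun n =>
    ((k n : ℝ) / n) • ((1 / (k n : ℝ)) • ∑ j ∈ Finset.range (k n), v j) with hmaindef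
  have hmain : Filter.Tendsto main Filter.atTop (nhds L) := by
    have h := hratio.smul (hconv.comp hktop)
    rw [one_smul] at h
    exact h
  set a : ℕ → X := fun n => (1 / (n : ℝ)) • ∑ j ∈ Finset.range n, v (k j) with hadef
  have hdiff : Filter.Tendsto (fun n => a n - main n) Filter.atTop (nhds 0) := by
    apply squeeze_zero_norm' _ hErr
    filter_upwards [Filter.eventually_gt_atTop 0] with n hn
    have hk0 : 0 < k n := lt_of_lt_of_le hn (hkge n)
    have hn' : (n : ℝ) ≠ 0 := Nat.cast_ne_zero.mpr hn.ne'
    have hkn' : (k n : ℝ) ≠ 0 := Nat.cast_ne_zero.mpr hk0.ne'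
    -- rewrite a n as sum over the filter
    have ha_eq : a n = (1 / (n : ℝ)) •
        ∑ m ∈ (Finset.range (k n)).filter (fun j => j ∈ Set.range k), v m := by
      rw [himg, Finset.sum_image (fun x _ y _ h => hk.injective h)]
    have hmain_eq : main n = (1 / (n : ℝ)) • ∑ j ∈ Finset.range (k n), v j := by
      show ((k n : ℝ) / n) • ((1 / (k n : ℝ)) • ∑ j ∈ Finset.range (k n), v j)
        = (1 / (n : ℝ)) • ∑ j ∈ Finset.range (k n), v j
      rw [smul_smul]
      congr 1
      field_simp
    rw [ha_eq, hmain_eq, ← smul_sub]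
    have hsplit : ∑ j ∈ Finset.range (k n), v j
        = (∑ m ∈ (Finset.range (k n)).filter (fun j => j ∈ Set.range k), v m)
          + ∑ m ∈ (Finset.range (k n)).filter (fun j => ¬ j ∈ Set.range k), v m :=
      (Finset.sum_filter_add_sum_filter_not _ _ _).symm
    have hdiffsum : (∑ m ∈ (Finset.range (k n)).filter (fun j => j ∈ Set.range k), v m)
        - ∑ j ∈ Finset.range (k n), v j
        = - ∑ m ∈ (Finset.range (k n)).filter (fun j => ¬ j ∈ Set.range k), v m := by
      rw [hsplit]; abel
    rw [hdiffsum, smul_neg, norm_neg, norm_smul]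
    have hcardnot : ((Finset.range (k n)).filter (fun j => ¬ j ∈ Set.range k)).card
        = k n - n := by
      have h := Finset.card_filter_add_card_filter_not
        (s := Finset.range (k n)) (p := fun j => j ∈ Set.range k)
      rw [hcard, Finset.card_range] at h
      omega
    have hnormsum : ‖∑ m ∈ (Finset.range (k n)).filter (fun j => ¬ j ∈ Set.range k), v m‖
        ≤ ((k n : ℝ) - n) * C' := by
      calc ‖∑ m ∈ (Finset.range (k n)).filter (fun j => ¬ j ∈ Set.range k), v m‖
          ≤ ∑ m ∈ (Finset.range (k n)).filter (fun j => ¬ j ∈ Set.range k), ‖v m‖ :=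
            norm_sum_le _ _
        _ ≤ ∑ _m ∈ (Finset.range (k n)).filter (fun j => ¬ j ∈ Set.range k), C' :=
            Finset.sum_le_sum (fun m _ => hvC' m)
        _ = (((k n : ℕ) - n : ℕ) : ℝ) * C' := by
            rw [Finset.sum_const, hcardnot, nsmul_eq_mul]
        _ = ((k n : ℝ) - n) * C' := by
            rw [Nat.cast_sub (hkge n)]
    calc ‖(1 / (n : ℝ))‖ * ‖∑ m ∈ (Finset.range (k n)).filter (fun j => ¬ j ∈ Set.range k), v m‖
        ≤ (1 / (n : ℝ)) * (((k n : ℝ) - n) * C') := by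
          apply mul_le_mul _ hnormsum (norm_nonneg _) (by positivity)
          rw [Real.norm_eq_abs, abs_of_nonneg (by positivity)]
      _ = ((k n : ℝ) - n) / n * C' := by ring
  have := hdiff.add hmain
  simp only [zero_add] at this
  refine this.congr fun n => ?_
  simp [hadef]
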